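/- A matching M in a vertex-weighted bipartite graph G = (A ∪ B, E) is popular if and only if there exists a vector y ∈ Q^V with sum of entries equal to 0, such that y_a + y_b ≥ vote^M({a,b}) for every edge {a,b} ∈ E, y_v ≥ 0 for every vertex v unmatched by M, and y_v ≥ −w(v) for every vertex v. -/

import Mathlib

structure PMInstance (V : Type) [Fintype V] [DecidableEq V] where
  A : Finset V
  E : V → V → Prop
  Esymm : ∀ u v : V, E u v → E v u
  loopless : ∀ v : V, ¬ E v v
  bipartite : ∀ u v : V, E u v → (u ∈ A ↔ v ∉ A)
  pref : V → V → V → Prop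
  pref_irrefl : ∀ v u : V, ¬ pref v u u
  pref_trans : ∀ v u z t : V, pref v u z → pref v z t → pref v u t
  pref_asymm : ∀ v u z : V, pref v u z → ¬ pref v z u
  pref_total : ∀ v u z : V, E v u → E v z → u ≠ z → pref v u z ∨ pref v z u
  w : V → ℚ
  w_nonneg : ∀ v : V, 0 ≤ w v

structure Matching (V : Type) [Fintype V] [DecidableEq V] (E : V → V → Prop) where
  m : V → Option V
  msymm : ∀ u v : V, m u = some v ↔ m v = some u
  valid : ∀ u v : V, m u = some v → E u v

attribute [local instance] Classical.propDecidable

variable {V : Type} [Fintype V] [DecidableEq V]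

/-- Vertex `v` prefers matching `M` to matching `M'`. -/
def prefersVx (I : PMInstance V) (M M' : Matching V I.E) (v : V) : Prop :=
  (M'.m v = none ∧ M.m v ≠ none) ∨
    (∃ u u' : V, M.m v = some u ∧ M'.m v = some u' ∧ I.pref v u u')

/-- Total weight of the vertices preferring `M` to `M'`. -/
noncomputable def weightPref (I : PMInstance V) (M M' : Matching V I.E) : ℚ :=
  ∑ v : V, if prefersVx I M M' v then I.w v else 0

/-- A matching is popular if it never loses a weighted head-to-head comparison. -/
def popular (I : PMInstance V) (M : Matching V I.E) : Prop :=
  ∀ M' : Matching V I.E, weightPref I M' M ≤ weightPref I M M'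

/-- The vote of `u` for `v` against its partner in `M`. -/
noncomputable def vote (I : PMInstance V) (M : Matching V I.E) (u v : V) : ℚ :=
  if M.m u = some v then 0
  else if M.m u = none ∨ (∃ z : V, M.m u = some z ∧ I.pref u v z) then I.w u
  else - I.w u

/-- A witness of popularity of `M`. -/
def IsWitness (I : PMInstance V) (M : Matching V I.E) (y : V → ℚ) : Prop :=
  (∑ v : V, y v) = 0 ∧
  (∀ u v : V, I.E u v → vote I M u v + vote I M v u ≤ y u + y v) ∧
  (∀ v : V, M.m v = none → 0 ≤ y v) ∧
  (∀ v : V, - I.w v ≤ y v)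

namespace PopAux

open Finset

variable {V : Type} [Fintype V] [DecidableEq V]

/-- The empty matching. -/
def MEmpty (E : V → V → Prop) : Matching V E where
  m := fun _ => none
  msymm := by intro u v; simp
  valid := by intro u v h; simp at h

noncomputable instance instFintypeMatching (E : V → V → Prop) : Fintype (Matching V E) :=
  Fintype.ofInjective Matching.m (fun M N h => by cases M; cases N; simpa using h)

/-- Doubled weight of a matching. -/
def Wt {β : Type} [AddCommMonoid β] {E : V → V → Prop} (c : V → V → β)
    (M : Matching V E) : β :=
  ∑ v, (M.m v).elim 0 (c v)

lemma wt_nonempty {β : Type} [AddCommMonoid β] (E : V → V → Prop) (c : V → V → β) :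
    (Finset.univ.image (Wt (E := E) c)).Nonempty :=
  Finset.Nonempty.image ⟨MEmpty E, mem_univ _⟩ _

noncomputable def maxW {β : Type} [AddCommMonoid β] [LinearOrder β] (E : V → V → Prop)
    (c : V → V → β) : β :=
  (Finset.univ.image (Wt (E := E) c)).max' (wt_nonempty E c)

lemma Wt_le_maxW {β : Type} [AddCommMonoid β] [LinearOrder β] {E : V → V → Prop}
    (c : V → V → β) (M : Matching V E) : Wt c M ≤ maxW E c :=
  Finset.le_max' _ _ (mem_image_of_mem _ (mem_univ M))

lemma maxW_le {β : Type} [AddCommMonoid β] [LinearOrder β] {E : V → V → Prop}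
    (c : V → V → β) (b : β) (h : ∀ M : Matching V E, Wt c M ≤ b) : maxW E c ≤ b := by
  apply Finset.max'_le
  intro x hx
  obtain ⟨M, _, rfl⟩ := Finset.mem_image.mp hx
  exact h M

lemma exists_maxW {β : Type} [AddCommMonoid β] [LinearOrder β] (E : V → V → Prop)
    (c : V → V → β) : ∃ M : Matching V E, Wt c M = maxW E c := by
  have h := Finset.max'_mem (Finset.univ.image (Wt (E := E) c)) (wt_nonempty E c)
  rw [mem_image] at h
  obtain ⟨M, _, hM⟩ := h
  exact ⟨M, hM⟩

lemma partner_invol {E : V → V → Prop} (M : Matching V E) (v : V) :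
    (M.m ((M.m v).getD v)).getD ((M.m v).getD v) = v := by
  cases h : M.m v with
  | none => simp [h]
  | some u => have := (M.msymm v u).mp h; simp [this]

/-- Core flip lemma along the bipartition. -/
lemma flipA {β : Type} [AddCommMonoid β] (I : PMInstance V) (M : Matching V I.E)
    (g : V → V → β) :
    ∑ v, (M.m v).elim 0 (fun u => if v ∈ I.A then 0 else g v u)
      = ∑ v, (M.m v).elim 0 (fun u => if v ∈ I.A then g u v else 0) := by
  refine Finset.sum_nbij' (fun v => (M.m v).getD v) (fun v => (M.m v).getD v)
    (fun a _ => mem_univ _) (fun a _ => mem_univ _)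
    (fun a _ => partner_invol M a) (fun a _ => partner_invol M a) ?_
  intro v _
  cases h : M.m v with
  | none => simp [h]
  | some u =>
    have hvu : M.m u = some v := (M.msymm v u).mp h
    have hE : I.E v u := M.valid v u h
    have hbip := I.bipartite v u hE
    simp only [h, Option.elim, Option.getD, hvu]
    by_cases hv : v ∈ I.A
    · have : u ∉ I.A := hbip.mp hv
      simp [hv, this]
    · have : u ∈ I.A := by
        by_contra hu; exact hv (hbip.mpr hu)
      simp [hv, this]

lemma Wt_split {β : Type} [AddCommMonoid β] (I : PMInstance V) (M : Matching V I.E)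
    (c : V → V → β) :
    Wt c M = ∑ v, (M.m v).elim 0 (fun u => if v ∈ I.A then c v u + c u v else 0) := by
  have h1 : ∀ v : V, (M.m v).elim (0:β) (c v)
      = (M.m v).elim 0 (fun u => if v ∈ I.A then c v u else 0)
        + (M.m v).elim 0 (fun u => if v ∈ I.A then 0 else c v u) := by
    intro v; cases M.m v with
    | none => simp
    | some u => by_cases h : v ∈ I.A <;> simp [h]
  have h2 : ∀ v : V, (M.m v).elim (0:β) (fun u => if v ∈ I.A then c v u + c u v else 0)
      = (M.m v).elim 0 (fun u => if v ∈ I.A then c v u else 0)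
        + (M.m v).elim 0 (fun u => if v ∈ I.A then c u v else 0) := by
    intro v; cases M.m v with
    | none => simp
    | some u => by_cases h : v ∈ I.A <;> simp [h]
  rw [Wt]
  simp_rw [h1, h2, Finset.sum_add_distrib]
  congr 1
  exact flipA I M c

lemma Wt_flip {β : Type} [AddCommMonoid β] (I : PMInstance V) (M : Matching V I.E)
    (g : V → V → β) :
    ∑ v, (M.m v).elim 0 (g v) = ∑ v, (M.m v).elim 0 (fun u => g u v) := by
  have h1 := Wt_split I M g
  have h2 := Wt_split I M (fun v u => g u v)
  rw [Wt] at h1 h2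
  rw [h1, h2]
  apply Finset.sum_congr rfl
  intro v _
  cases M.m v with
  | none => simp
  | some u => by_cases h : v ∈ I.A <;> simp [h, add_comm]

lemma even_Wt (I : PMInstance V) (c : V → V → ℕ) (hsym : ∀ u v, c u v = c v u)
    (M : Matching V I.E) : ∃ k, Wt c M = 2 * k := by
  refine ⟨∑ v, (M.m v).elim 0 (fun u => if v ∈ I.A then c v u else 0), ?_⟩
  rw [Wt_split I M c, Finset.mul_sum]
  apply Finset.sum_congr rfl
  intro v _
  cases M.m v with
  | none => simp
  | some u => by_cases h : v ∈ I.A <;> simp [h, hsym u v, two_mul]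


/-- Restrict a matching keeping only edges satisfying p. -/
noncomputable def restrict {E : V → V → Prop} (M : Matching V E) (p : V → V → Prop)
    (hp : ∀ u v, p u v → p v u) : Matching V E where
  m v := (M.m v).bind (fun u => if p v u then some u else none)
  msymm := by
    have key : ∀ x y : V, ((M.m x).bind (fun z => if p x z then some z else none) = some y)
        ↔ (M.m x = some y ∧ p x y) := by
      intro x y
      rw [Option.bind_eq_some_iff]
      constructor
      · rintro ⟨a, ha, hif⟩
        by_cases h : p x a
        · rw [if_pos h] at hif; obtain rfl := Option.some.inj hif; exact ⟨ha, h⟩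
        · rw [if_neg h] at hif; cases hif
      · rintro ⟨ha, h⟩; exact ⟨y, ha, if_pos h⟩
    intro u v
    rw [key, key]
    constructor
    · rintro ⟨h1, h2⟩; exact ⟨(M.msymm u v).mp h1, hp u v h2⟩
    · rintro ⟨h1, h2⟩; exact ⟨(M.msymm v u).mp h1, hp v u h2⟩
  valid := by
    intro u v h
    have h' : (M.m u).bind (fun z => if p u z then some z else none) = some v := h
    rw [Option.bind_eq_some_iff] at h'
    obtain ⟨a, ha, hif⟩ := h'
    by_cases hpa : p u a
    · rw [if_pos hpa] at hif; obtain rfl := Option.some.inj hif; exact M.valid u a ha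
    · rw [if_neg hpa] at hif; cases hif

lemma restrict_m_eq_some {E : V → V → Prop} (M : Matching V E) (p : V → V → Prop)
    (hp : ∀ u v, p u v → p v u) (x y : V) :
    (restrict M p hp).m x = some y ↔ (M.m x = some y ∧ p x y) := by
  show ((M.m x).bind (fun z => if p x z then some z else none) = some y) ↔ _
  rw [Option.bind_eq_some_iff]
  constructor
  · rintro ⟨a, ha, hif⟩
    by_cases h : p x a
    · rw [if_pos h] at hif; obtain rfl := Option.some.inj hif; exact ⟨ha, h⟩
    · rw [if_neg h] at hif; cases hif
  · rintro ⟨ha, h⟩; exact ⟨y, ha, if_pos h⟩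

lemma restrict_m_cases {E : V → V → Prop} (M : Matching V E) (p : V → V → Prop)
    (hp : ∀ u v, p u v → p v u) (x : V) :
    (restrict M p hp).m x = none ∨
      ((restrict M p hp).m x = M.m x ∧ ∀ y, M.m x = some y → p x y) := by
  cases h : M.m x with
  | none =>
    left
    show (M.m x).bind _ = none
    rw [h]; rfl
  | some u =>
    by_cases hpu : p x u
    · right
      constructor
      · exact (restrict_m_eq_some M p hp x u).mpr ⟨h, hpu⟩
      · intro y hy
        obtain rfl : u = y := Option.some.inj hy
        exact hpu
    · left
      show (M.m x).bind _ = none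
      rw [h]; simp [hpu]

/-- Add an edge between two unmatched vertices. -/
noncomputable def addEdge {E : V → V → Prop} (M : Matching V E) (a b : V) (hE : E a b)
    (hE' : E b a) (hab : a ≠ b) (ha : M.m a = none) (hb : M.m b = none) : Matching V E where
  m v := if v = a then some b else if v = b then some a else M.m v
  msymm := by
    have nota : ∀ x : V, ¬ (M.m x = some a) := by
      intro x hx
      have := (M.msymm x a).mp hx
      rw [ha] at this; cases this
    have notb : ∀ x : V, ¬ (M.m x = some b) := by
      intro x hx
      have := (M.msymm x b).mp hx
      rw [hb] at this; cases this
    have key : ∀ x y : V, ((if x = a then some b else if x = b then some a else M.m x) = some y)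
        ↔ ((x = a ∧ y = b) ∨ (x = b ∧ y = a) ∨ (¬ x = a ∧ ¬ x = b ∧ M.m x = some y)) := by
      intro x y
      by_cases h1 : x = a
      · rw [if_pos h1]
        constructor
        · intro h; exact Or.inl ⟨h1, (Option.some.inj h).symm⟩
        · rintro (⟨_, rfl⟩ | ⟨h2, _⟩ | ⟨h2, _, _⟩)
          · rfl
          · exact absurd (h1.symm.trans h2) hab
          · exact absurd h1 h2
      · rw [if_neg h1]
        by_cases h2 : x = b
        · rw [if_pos h2]
          constructor
          · intro h; exact Or.inr (Or.inl ⟨h2, (Option.some.inj h).symm⟩)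
          · rintro (⟨h3, _⟩ | ⟨_, rfl⟩ | ⟨_, h3, _⟩)
            · exact absurd h3 h1
            · rfl
            · exact absurd h2 h3
        · rw [if_neg h2]
          constructor
          · intro h; exact Or.inr (Or.inr ⟨h1, h2, h⟩)
          · rintro (⟨h3, _⟩ | ⟨h3, _⟩ | ⟨_, _, h3⟩)
            · exact absurd h3 h1
            · exact absurd h3 h2
            · exact h3
    have main : ∀ x y : V,
        ((x = a ∧ y = b) ∨ (x = b ∧ y = a) ∨ (¬ x = a ∧ ¬ x = b ∧ M.m x = some y)) →
        ((y = a ∧ x = b) ∨ (y = b ∧ x = a) ∨ (¬ y = a ∧ ¬ y = b ∧ M.m y = some x)) := by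
      rintro x y (⟨hx, hy⟩ | ⟨hx, hy⟩ | ⟨hx1, hx2, hx3⟩)
      · exact Or.inr (Or.inl ⟨hy, hx⟩)
      · exact Or.inl ⟨hy, hx⟩
      · refine Or.inr (Or.inr ⟨?_, ?_, (M.msymm x y).mp hx3⟩)
        · intro hya; rw [hya] at hx3; exact nota x hx3
        · intro hyb; rw [hyb] at hx3; exact notb x hx3
    intro u v
    show (if u = a then some b else if u = b then some a else M.m u) = some v ↔
      (if v = a then some b else if v = b then some a else M.m v) = some u
    rw [key, key]
    exact ⟨main u v, main v u⟩
  valid := by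
    intro u v h
    have h' : (if u = a then some b else if u = b then some a else M.m u) = some v := h
    by_cases hua : u = a
    · rw [if_pos hua] at h'; obtain rfl := Option.some.inj h'; rw [hua]; exact hE
    · rw [if_neg hua] at h'
      by_cases hub : u = b
      · rw [if_pos hub] at h'; obtain rfl := Option.some.inj h'; rw [hub]; exact hE'
      · rw [if_neg hub] at h'; exact M.valid u v h'

/-- Combine two matchings along a closed set. -/
noncomputable def combine {E : V → V → Prop} (Min Mout : Matching V E) (S : V → Prop)
    (hin : ∀ v u, S v → Min.m v = some u → S u)
    (hout : ∀ v u, S v → Mout.m v = some u → S u) : Matching V E where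
  m v := if S v then Min.m v else Mout.m v
  msymm := by
    intro u v
    show (if S u then Min.m u else Mout.m u) = some v ↔
      (if S v then Min.m v else Mout.m v) = some u
    by_cases hu : S u <;> by_cases hv : S v
    · rw [if_pos hu, if_pos hv]; exact Min.msymm u v
    · rw [if_pos hu, if_neg hv]
      constructor
      · intro h; exact absurd (hin u v hu h) hv
      · intro h
        have := (Mout.msymm v u).mp h
        exact absurd (hout u v hu this) hv
    · rw [if_neg hu, if_pos hv]
      constructor
      · intro h
        have := (Mout.msymm u v).mp h
        exact absurd (hout v u hv this) hu
      · intro h; exact absurd (hin v u hv h) hu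
    · rw [if_neg hu, if_neg hv]; exact Mout.msymm u v
  valid := by
    intro u v h
    have h' : (if S u then Min.m u else Mout.m u) = some v := h
    by_cases hu : S u
    · rw [if_pos hu] at h'; exact Min.valid u v h'
    · rw [if_neg hu] at h'; exact Mout.valid u v h'

lemma combine_m {E : V → V → Prop} (Min Mout : Matching V E) (S : V → Prop)
    (hin : ∀ v u, S v → Min.m v = some u → S u)
    (hout : ∀ v u, S v → Mout.m v = some u → S u) (v : V) :
    (combine Min Mout S hin hout).m v = if S v then Min.m v else Mout.m v := rfl

lemma Wt_combine_add {β : Type} [AddCommMonoid β] {E : V → V → Prop} (c : V → V → β)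
    (Ma Mb : Matching V E) (S : V → Prop)
    (ha : ∀ v u, S v → Ma.m v = some u → S u)
    (hb : ∀ v u, S v → Mb.m v = some u → S u) :
    Wt c (combine Mb Ma S hb ha) + Wt c (combine Ma Mb S ha hb) = Wt c Ma + Wt c Mb := by
  rw [Wt, Wt, Wt, Wt, ← Finset.sum_add_distrib, ← Finset.sum_add_distrib]
  apply Finset.sum_congr rfl
  intro v _
  rw [combine_m, combine_m]
  by_cases h : S v
  · rw [if_pos h, if_pos h]; exact add_comm _ _
  · rw [if_neg h, if_neg h]

lemma Wt_addEdge {β : Type} [AddCommMonoid β] {E : V → V → Prop} (c : V → V → β)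
    (M : Matching V E) (a b : V) (hE : E a b) (hE' : E b a) (hab : a ≠ b)
    (ha : M.m a = none) (hb : M.m b = none) :
    Wt c (addEdge M a b hE hE' hab ha hb) = Wt c M + (c a b + c b a) := by
  have key : ∀ v : V, ((addEdge M a b hE hE' hab ha hb).m v).elim (0:β) (c v)
      = (M.m v).elim 0 (c v)
        + ((if v = a then c a b else 0) + (if v = b then c b a else 0)) := by
    intro v
    have hm : (addEdge M a b hE hE' hab ha hb).m v
        = (if v = a then some b else if v = b then some a else M.m v) := rfl
    by_cases h1 : v = a
    · subst h1
      rw [hm, if_pos rfl, ha, if_pos rfl, if_neg hab]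
      simp
    · by_cases h2 : v = b
      · subst h2
        rw [hm, if_neg h1, if_pos rfl, hb, if_neg h1, if_pos rfl]
        simp
      · rw [hm, if_neg h1, if_neg h2, if_neg h1, if_neg h2]
        simp
  rw [Wt, Wt]
  simp_rw [key]
  rw [Finset.sum_add_distrib, Finset.sum_add_distrib, Finset.sum_ite_eq' Finset.univ a,
    Finset.sum_ite_eq' Finset.univ b]
  simp [add_assoc]

section Walk

variable (I : PMInstance V)

/-- Alternating walk starting at `b`: even steps use `Ma`, odd steps use `Mb`. -/
def walk (Ma Mb : Matching V I.E) (b : V) : ℕ → Option V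
  | 0 => some b
  | n+1 => (walk Ma Mb b n).bind (fun v => if n % 2 = 0 then Ma.m v else Mb.m v)

variable (Ma Mb : Matching V I.E) (a b : V)

lemma walk_side (hab : I.E a b) : ∀ n v, walk I Ma Mb b n = some v →
    (v ∈ I.A ↔ (b ∈ I.A ↔ n % 2 = 0)) := by
  intro n
  induction n with
  | zero =>
    intro v h
    obtain rfl : b = v := Option.some.inj h
    simp
  | succ n ih =>
    intro v h
    rw [walk, Option.bind_eq_some_iff] at h
    obtain ⟨u, hu, hstep⟩ := h
    have hedge : I.E u v := by
      by_cases hn : n % 2 = 0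
      · rw [if_pos hn] at hstep; exact Ma.valid u v hstep
      · rw [if_neg hn] at hstep; exact Mb.valid u v hstep
    have hbip := I.bipartite u v hedge
    have ihu := ih u hu
    have hpar : ((n+1) % 2 = 0) ↔ ¬ (n % 2 = 0) := by omega
    rw [hpar]
    tauto

lemma walk_closed_Ma (hMbb : Mb.m b = none) :
    ∀ v u, (∃ n, walk I Ma Mb b n = some v) → Ma.m v = some u →
      ∃ n, walk I Ma Mb b n = some u := by
  rintro v u ⟨n, hn⟩ h
  by_cases hp : n % 2 = 0
  · refine ⟨n+1, ?_⟩
    rw [walk, hn]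
    show (if n % 2 = 0 then Ma.m v else Mb.m v) = some u
    rw [if_pos hp, h]
  · obtain ⟨m, rfl⟩ : ∃ m, n = m + 1 := ⟨n - 1, by omega⟩
    have hm : m % 2 = 0 := by omega
    rw [walk, Option.bind_eq_some_iff] at hn
    obtain ⟨w, hw, hstep⟩ := hn
    rw [if_pos hm] at hstep
    have hvw : Ma.m v = some w := (Ma.msymm w v).mp hstep
    rw [h] at hvw
    obtain rfl : u = w := Option.some.inj hvw
    exact ⟨m, hw⟩

lemma walk_closed_Mb (hMbb : Mb.m b = none) :
    ∀ v u, (∃ n, walk I Ma Mb b n = some v) → Mb.m v = some u →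
      ∃ n, walk I Ma Mb b n = some u := by
  rintro v u ⟨n, hn⟩ h
  by_cases hp : n % 2 = 0
  · rcases Nat.eq_zero_or_pos n with rfl | hpos
    · obtain rfl : b = v := Option.some.inj hn
      rw [hMbb] at h; cases h
    · obtain ⟨m, rfl⟩ : ∃ m, n = m + 1 := ⟨n - 1, by omega⟩
      have hm : ¬ (m % 2 = 0) := by omega
      rw [walk, Option.bind_eq_some_iff] at hn
      obtain ⟨w, hw, hstep⟩ := hn
      rw [if_neg hm] at hstep
      have hvw : Mb.m v = some w := (Mb.msymm w v).mp hstep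
      rw [h] at hvw
      obtain rfl : u = w := Option.some.inj hvw
      exact ⟨m, hw⟩
  · refine ⟨n+1, ?_⟩
    rw [walk, hn]
    show (if n % 2 = 0 then Ma.m v else Mb.m v) = some u
    rw [if_neg hp, h]

lemma walk_not_a (hab : I.E a b) (hMaa : Ma.m a = none) :
    ¬ ∃ n, walk I Ma Mb b n = some a := by
  rintro ⟨n, hn⟩
  by_cases hp : n % 2 = 0
  · have hside := walk_side I Ma Mb a b hab n a hn
    have hbip := I.bipartite a b hab
    tauto
  · obtain ⟨m, rfl⟩ : ∃ m, n = m + 1 := ⟨n - 1, by omega⟩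
    have hm : m % 2 = 0 := by omega
    rw [walk, Option.bind_eq_some_iff] at hn
    obtain ⟨w, hw, hstep⟩ := hn
    rw [if_pos hm] at hstep
    have : Ma.m a = some w := (Ma.msymm w a).mp hstep
    rw [hMaa] at this; cases this

end Walk

/-- Key lemma: some vertex is covered by every positive maximum-weight matching. -/
lemma exists_cover_vertex (I : PMInstance V) (c : V → V → ℕ) (a b : V)
    (hab : I.E a b) (hca : 1 ≤ c a b) (hcb : 1 ≤ c b a) :
    ∃ t : V, ∀ M : Matching V I.E, Wt c M = maxW I.E c →
      (∀ v u, M.m v = some u → 1 ≤ c v u) → M.m t ≠ none := by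
  by_contra hcon
  push_neg at hcon
  obtain ⟨Ma, hMamax, _, hMaa⟩ := hcon a
  obtain ⟨Mb, hMbmax, _, hMbb⟩ := hcon b
  have hne : a ≠ b := by
    intro h
    rw [h] at hab
    exact I.loopless b hab
  set S : V → Prop := fun v => ∃ n, walk I Ma Mb b n = some v with hS
  have hSa : ∀ v u, S v → Ma.m v = some u → S u := fun v u hv h =>
    walk_closed_Ma I Ma Mb b hMbb v u hv h
  have hSb : ∀ v u, S v → Mb.m v = some u → S u := fun v u hv h =>
    walk_closed_Mb I Ma Mb b hMbb v u hv h
  have hbS : S b := ⟨0, rfl⟩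
  have haS : ¬ S a := walk_not_a I Ma Mb a b hab hMaa
  set M1 := combine Mb Ma S hSb hSa with hM1
  set M2 := combine Ma Mb S hSa hSb with hM2
  have hsum := Wt_combine_add c Ma Mb S hSa hSb
  rw [← hM1, ← hM2] at hsum
  have h1 : Wt c M1 ≤ maxW I.E c := Wt_le_maxW c M1
  have h2 : Wt c M2 ≤ maxW I.E c := Wt_le_maxW c M2
  have hM1max : Wt c M1 = maxW I.E c := by
    rw [hMamax, hMbmax] at hsum
    omega
  have hM1b : M1.m b = none := by
    rw [hM1, combine_m, if_pos hbS]
    exact hMbb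
  have hM1a : M1.m a = none := by
    rw [hM1, combine_m, if_neg haS]
    exact hMaa
  set M3 := addEdge M1 a b hab (I.Esymm a b hab) hne hM1a hM1b with hM3
  have h3 : Wt c M3 ≤ maxW I.E c := Wt_le_maxW c M3
  rw [hM3, Wt_addEdge, hM1max] at h3
  omega
lemma Wt_mono {E : V → V → Prop} (c c' : V → V → ℕ) (h : ∀ u v, c' u v ≤ c u v)
    (M : Matching V E) : Wt c' M ≤ Wt c M := by
  apply Finset.sum_le_sum
  intro v _
  cases hv : M.m v with
  | none => simp
  | some u => simpa using h v u

lemma maxW_mono {E : V → V → Prop} (c c' : V → V → ℕ) (h : ∀ u v, c' u v ≤ c u v) :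
    maxW E c' ≤ maxW E c := by
  obtain ⟨M, hM⟩ := exists_maxW E c'
  rw [← hM]
  exact le_trans (Wt_mono c c' h M) (Wt_le_maxW c M)

/-- Drop the weight-zero edges of a matching. -/
noncomputable def posify (c : V → V → ℕ) (hsym : ∀ u v, c u v = c v u) {E : V → V → Prop}
    (M : Matching V E) : Matching V E :=
  restrict M (fun v u => 1 ≤ c v u) (fun u v h => by have h' : 1 ≤ c u v := h; show 1 ≤ c v u; rw [hsym v u]; exact h')

lemma posify_pos (c : V → V → ℕ) (hsym : ∀ u v, c u v = c v u) {E : V → V → Prop}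
    (M : Matching V E) (v u : V) (h : (posify c hsym M).m v = some u) : 1 ≤ c v u :=
  ((restrict_m_eq_some M _ _ v u).mp h).2

lemma posify_Wt (c : V → V → ℕ) (hsym : ∀ u v, c u v = c v u) {E : V → V → Prop}
    (M : Matching V E) : Wt c (posify c hsym M) = Wt c M := by
  rw [Wt, Wt]
  apply Finset.sum_congr rfl
  intro v _
  rcases restrict_m_cases M (fun v u => 1 ≤ c v u) (fun u v h => by have h' : 1 ≤ c u v := h; show 1 ≤ c v u; rw [hsym v u]; exact h') v
    with h | ⟨h, _⟩
  · rw [show (posify c hsym M).m v = none from h]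
    cases hv : M.m v with
    | none => rfl
    | some u =>
      by_cases hc1 : 1 ≤ c v u
      · exfalso
        have := (restrict_m_eq_some M (fun v u => 1 ≤ c v u)
          (fun u v h => by have h' : 1 ≤ c u v := h; show 1 ≤ c v u; rw [hsym v u]; exact h') v u).mpr ⟨hv, hc1⟩
        rw [show (restrict M (fun v u => 1 ≤ c v u)
          (fun u v h => by have h' : 1 ≤ c u v := h; show 1 ≤ c v u; rw [hsym v u]; exact h')).m v = none from h] at this
        cases this
      · have hz : c v u = 0 := by omega
        simp [hz]
  · rw [show (posify c hsym M).m v = M.m v from h]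

lemma EGV_base (I : PMInstance V) (c : V → V → ℕ) (h0 : ∀ u v, I.E u v → c u v = 0) :
    ∃ s : V → ℚ, (∀ v, 0 ≤ s v) ∧ (∀ u v, I.E u v → (c u v : ℚ) ≤ s u + s v) ∧
      2 * (∑ v, s v) ≤ ((maxW I.E c : ℕ) : ℚ) := by
  refine ⟨fun _ => 0, fun v => le_refl 0, ?_, ?_⟩
  · intro u v h
    rw [h0 u v h]
    simp
  · simp

lemma EGV_int (I : PMInstance V) : ∀ (N : ℕ) (c : V → V → ℕ),
    (∑ u, ∑ v, c u v) ≤ N → (∀ u v, c u v = c v u) →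
    ∃ s : V → ℚ, (∀ v, 0 ≤ s v) ∧ (∀ u v, I.E u v → (c u v : ℚ) ≤ s u + s v) ∧
      2 * (∑ v, s v) ≤ ((maxW I.E c : ℕ) : ℚ) := by
  intro N
  induction N with
  | zero =>
    intro c hN hsym
    apply EGV_base
    intro u v hE
    have h1 : c u v ≤ ∑ w, c u w :=
      Finset.single_le_sum (fun i _ => Nat.zero_le _) (Finset.mem_univ v)
    have h2 : (∑ w, c u w) ≤ ∑ x, ∑ w, c x w :=
      Finset.single_le_sum (f := fun x => ∑ w, c x w) (fun i _ => Nat.zero_le _)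
        (Finset.mem_univ u)
    omega
  | succ N ih =>
    intro c hN hsym
    by_cases h0 : ∀ u v, I.E u v → c u v = 0
    · exact EGV_base I c h0
    push_neg at h0
    obtain ⟨aa, bb, hEab, hcab⟩ := h0
    have hca : 1 ≤ c aa bb := by omega
    have hcb : 1 ≤ c bb aa := by rw [hsym bb aa]; omega
    obtain ⟨t, ht⟩ := exists_cover_vertex I c aa bb hEab hca hcb
    -- the vertex t is covered by some positive maximum matching; extract an edge at t
    obtain ⟨M0, hM0⟩ := exists_maxW I.E c
    have hM0p := posify_Wt c hsym M0
    have htcov : (posify c hsym M0).m t ≠ none :=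
      ht (posify c hsym M0) (by rw [hM0p, hM0]) (posify_pos c hsym M0)
    obtain ⟨u0, hu0⟩ : ∃ u, (posify c hsym M0).m t = some u := by
      cases h : (posify c hsym M0).m t with
      | none => exact absurd h htcov
      | some u => exact ⟨u, rfl⟩
    have hctu0 : 1 ≤ c t u0 := posify_pos c hsym M0 t u0 hu0
    have hEtu0 : I.E t u0 := (posify c hsym M0).valid t u0 hu0
    -- decremented weights
    set c' : V → V → ℕ := fun u v => if (u = t ∨ v = t) ∧ I.E u v then c u v - 1 else c u v
      with hc'def
    have hc'uv : ∀ u v, c' u v = if (u = t ∨ v = t) ∧ I.E u v then c u v - 1 else c u v :=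
      fun u v => rfl
    have hsym' : ∀ u v, c' u v = c' v u := by
      intro u v
      rw [hc'uv, hc'uv]
      by_cases h : (u = t ∨ v = t) ∧ I.E u v
      · have h' : (v = t ∨ u = t) ∧ I.E v u := ⟨h.1.symm, I.Esymm _ _ h.2⟩
        rw [if_pos h, if_pos h', hsym u v]
      · have h' : ¬ ((v = t ∨ u = t) ∧ I.E v u) := fun hc => h ⟨hc.1.symm, I.Esymm _ _ hc.2⟩
        rw [if_neg h, if_neg h', hsym u v]
    have hle : ∀ u v, c' u v ≤ c u v := by
      intro u v
      rw [hc'uv]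
      split <;> omega
    -- measure decreases
    have hmeas : (∑ u, ∑ v, c' u v) < ∑ u, ∑ v, c u v := by
      apply Finset.sum_lt_sum
      · intro i _
        exact Finset.sum_le_sum (fun j _ => hle i j)
      · refine ⟨t, Finset.mem_univ t, ?_⟩
        apply Finset.sum_lt_sum (fun j _ => hle t j)
        refine ⟨u0, Finset.mem_univ u0, ?_⟩
        rw [hc'uv, if_pos ⟨Or.inl rfl, hEtu0⟩]
        omega
    have hmeas' : (∑ u, ∑ v, c' u v) ≤ N := by omega
    -- key inequality : maxW c' + 2 ≤ maxW c
    have hino : maxW I.E c' ≤ maxW I.E c := maxW_mono c c' hle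
    have key : maxW I.E c' + 2 ≤ maxW I.E c := by
      obtain ⟨M'', hM''⟩ := exists_maxW I.E c'
      set M2 := posify c' hsym' M'' with hM2def
      have hWM2 : Wt c' M2 = maxW I.E c' := by rw [hM2def, posify_Wt, hM'']
      cases hcov : M2.m t with
      | none =>
        -- M2 avoids t, so its c-weight equals its c'-weight
        have hWM2c : Wt c M2 = Wt c' M2 := by
          rw [Wt, Wt]
          apply Finset.sum_congr rfl
          intro v _
          cases hv : M2.m v with
          | none => rfl
          | some u =>
            have hvt : v ≠ t := by
              intro h; rw [h, hcov] at hv; cases hv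
            have hut : u ≠ t := by
              intro h
              have h2 := (M2.msymm v u).mp hv
              rw [h, hcov] at h2; cases h2
            show c v u = c' v u
            rw [hc'uv, if_neg]
            rintro ⟨h | h, _⟩
            · exact hvt h
            · exact hut h
        by_cases hstrict : maxW I.E c' + 2 ≤ maxW I.E c
        · exact hstrict
        exfalso
        have heq : maxW I.E c' = maxW I.E c := by
          obtain ⟨Mc, hMc⟩ := exists_maxW I.E c
          obtain ⟨k1, hk1⟩ := even_Wt I c hsym Mc
          obtain ⟨k2, hk2⟩ := even_Wt I c' hsym' M''
          rw [hMc] at hk1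
          rw [hM''] at hk2
          omega
        have hfinal : M2.m t ≠ none := by
          apply ht M2
          · rw [hWM2c, hWM2, heq]
          · intro v u hvu
            exact le_trans (posify_pos c' hsym' M'' v u hvu) (hle v u)
        exact hfinal hcov
      | some u =>
        have h1c' : 1 ≤ c' t u := posify_pos c' hsym' M'' t u hcov
        have hEtu : I.E t u := M2.valid t u hcov
        have htu : t ≠ u := by
          intro h; rw [h] at hEtu; exact I.loopless u hEtu
        have hct : c t u = c' t u + 1 := by
          have h2 := hc'uv t u
          rw [if_pos ⟨Or.inl rfl, hEtu⟩] at h2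
          omega
        have hcu : c u t = c' u t + 1 := by
          have h2 := hc'uv u t
          rw [if_pos ⟨Or.inr rfl, I.Esymm t u hEtu⟩] at h2
          have h3 : 1 ≤ c' u t := by rw [← hsym' t u]; exact h1c'
          omega
        have hmut : M2.m u = some t := (M2.msymm t u).mp hcov
        have hWt2 : Wt c M2 = Wt c' M2 + 2 := by
          have key2 : ∀ v : V, (M2.m v).elim 0 (c v)
              = (M2.m v).elim 0 (c' v) + ((if v = t then 1 else 0) + (if v = u then 1 else 0)) := by
            intro v
            by_cases h1 : v = t
            · rw [h1, hcov]
              simp [hct, htu]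
            · by_cases h2 : v = u
              · rw [h2, hmut]
                simp [hcu, Ne.symm htu]
              · rw [if_neg h1, if_neg h2]
                cases hv : M2.m v with
                | none => rfl
                | some p =>
                  have hpt : p ≠ t := by
                    intro h
                    have h3 := (M2.msymm v p).mp hv
                    rw [h, hcov] at h3
                    exact h2 (Option.some.inj h3).symm
                  simp only [Option.elim]
                  rw [hc'uv, if_neg]
                  · omega
                  rintro ⟨h | h, _⟩
                  · exact h1 h
                  · exact hpt h
          rw [Wt, Wt]
          simp_rw [key2]
          rw [Finset.sum_add_distrib, Finset.sum_add_distrib,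
            Finset.sum_ite_eq' Finset.univ t (fun _ => (1:ℕ)),
            Finset.sum_ite_eq' Finset.univ u (fun _ => (1:ℕ))]
          simp
        have hle2 : Wt c M2 ≤ maxW I.E c := Wt_le_maxW c M2
        omega
    -- apply the induction hypothesis
    obtain ⟨s', hs0, hsc, hssum⟩ := ih c' hmeas' hsym'
    refine ⟨fun v => s' v + if v = t then 1 else 0, ?_, ?_, ?_⟩
    · intro v
      show 0 ≤ s' v + if v = t then (1:ℚ) else 0
      have := hs0 v
      by_cases h : v = t
      · rw [if_pos h]; linarith
      · rw [if_neg h]; linarith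
    · intro u v hEuv
      show (c u v : ℚ) ≤ (s' u + if u = t then (1:ℚ) else 0) + (s' v + if v = t then (1:ℚ) else 0)
      have hbase := hsc u v hEuv
      by_cases h1 : u = t
      · have h2 : v ≠ t := by
          intro h
          rw [h1, h] at hEuv
          exact I.loopless t hEuv
        have hc2 : c u v ≤ c' u v + 1 := by
          rw [hc'uv, if_pos ⟨Or.inl h1, hEuv⟩]; omega
        have hc2' : (c u v : ℚ) ≤ (c' u v : ℚ) + 1 := by exact_mod_cast hc2
        rw [if_pos h1, if_neg h2]
        linarith
      · by_cases h2 : v = t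
        · have hc2 : c u v ≤ c' u v + 1 := by
            rw [hc'uv, if_pos ⟨Or.inr h2, hEuv⟩]; omega
          have hc2' : (c u v : ℚ) ≤ (c' u v : ℚ) + 1 := by exact_mod_cast hc2
          rw [if_neg h1, if_pos h2]
          linarith
        · have hc2 : c u v = c' u v := by
            rw [hc'uv, if_neg]
            rintro ⟨h | h, _⟩
            · exact h1 h
            · exact h2 h
          have hc2' : (c u v : ℚ) = (c' u v : ℚ) := by exact_mod_cast hc2
          rw [if_neg h1, if_neg h2]
          linarith
    · have hsum2 : (∑ v, (s' v + if v = t then (1:ℚ) else 0)) = (∑ v, s' v) + 1 := by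
        rw [Finset.sum_add_distrib, Finset.sum_ite_eq' Finset.univ t (fun _ => (1:ℚ))]
        simp
      rw [hsum2]
      have hkey' : ((maxW I.E c' : ℕ) : ℚ) + 2 ≤ ((maxW I.E c : ℕ) : ℚ) := by
        exact_mod_cast key
      linarith
lemma Wt_cast {E : V → V → Prop} (cN : V → V → ℕ) (M : Matching V E) :
    ((Wt cN M : ℕ) : ℚ) = Wt (fun u v => ((cN u v : ℕ) : ℚ)) M := by
  rw [Wt, Wt, Nat.cast_sum]
  apply Finset.sum_congr rfl
  intro v _
  cases hv : M.m v <;> simp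

lemma Wt_clip_le (I : PMInstance V) (c : V → V → ℚ) (hsym : ∀ u v, c u v = c v u)
    (M : Matching V I.E) :
    Wt (fun u v => max (c u v) 0) M ≤ maxW I.E c := by
  have hp : ∀ u v : V, (fun v u => 0 < c v u) u v → (fun v u => 0 < c v u) v u := by
    intro u v h
    have h' : 0 < c u v := h
    show 0 < c v u
    rw [hsym v u]; exact h'
  set M' := restrict M (fun v u => 0 < c v u) hp with hM'
  have hkey : Wt (fun u v => max (c u v) 0) M = Wt c M' := by
    rw [Wt, Wt]
    apply Finset.sum_congr rfl
    intro v _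
    rcases restrict_m_cases M (fun v u => 0 < c v u) hp v with h | ⟨h, hall⟩
    · rw [show M'.m v = none from h]
      cases hv : M.m v with
      | none => rfl
      | some u =>
        by_cases hc : 0 < c v u
        · exfalso
          have := (restrict_m_eq_some M (fun v u => 0 < c v u) hp v u).mpr ⟨hv, hc⟩
          rw [show M'.m v = none from h] at this
          cases this
        · have : max (c v u) 0 = 0 := max_eq_right (le_of_not_gt hc)
          simpa using this
    · rw [show M'.m v = M.m v from h]
      cases hv : M.m v with
      | none => rfl
      | some u =>
        have := hall u hv
        have : max (c v u) 0 = c v u := max_eq_left (le_of_lt this)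
        simpa using this
  rw [hkey]
  exact Wt_le_maxW c M'

lemma EGV_rat (I : PMInstance V) (c : V → V → ℚ) (hsym : ∀ u v, c u v = c v u) :
    ∃ s : V → ℚ, (∀ v, 0 ≤ s v) ∧ (∀ u v, I.E u v → c u v ≤ s u + s v) ∧
      2 * (∑ v, s v) ≤ maxW I.E c := by
  set cp : V → V → ℚ := fun u v => max (c u v) 0 with hcp
  have hcpsym : ∀ u v, cp u v = cp v u := by
    intro u v
    show max (c u v) 0 = max (c v u) 0
    rw [hsym]
  have hcpnn : ∀ u v, 0 ≤ cp u v := fun u v => le_max_right _ _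
  set n : ℕ := ∏ p ∈ (Finset.univ : Finset (V × V)), (cp p.1 p.2).den with hn
  have hn0 : 0 < n := Finset.prod_pos (fun p _ => (cp p.1 p.2).pos)
  have hdvd : ∀ u v : V, ((cp u v).den) ∣ n := fun u v =>
    Finset.dvd_prod_of_mem _ (Finset.mem_univ ((u, v) : V × V))
  have hint : ∀ u v : V, ∃ k : ℕ, (k : ℚ) = (n : ℚ) * cp u v := by
    intro u v
    obtain ⟨m, hm⟩ := hdvd u v
    refine ⟨m * (cp u v).num.toNat, ?_⟩
    have hnum : 0 ≤ (cp u v).num := Rat.num_nonneg.mpr (hcpnn u v)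
    have hden : ((cp u v).den : ℚ) * cp u v = (cp u v).num := Rat.den_mul_eq_num _
    push_cast [Int.toNat_of_nonneg hnum]
    rw [hm]
    push_cast
    rw [mul_comm ((cp u v).den : ℚ) (m : ℚ), mul_assoc, hden]
    rw [show (((cp u v).num.toNat : ℕ) : ℚ) = ((cp u v).num : ℚ) from by
      exact_mod_cast Int.toNat_of_nonneg hnum]
  choose cN hcN using hint
  have hcNsym : ∀ u v, cN u v = cN v u := by
    intro u v
    have h : ((cN u v : ℕ) : ℚ) = ((cN v u : ℕ) : ℚ) := by rw [hcN, hcN, hcpsym]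
    exact_mod_cast h
  obtain ⟨s', hs0, hsc, hssum⟩ := EGV_int I (∑ u, ∑ v, cN u v) cN le_rfl hcNsym
  have hnq : (0:ℚ) < n := by exact_mod_cast hn0
  refine ⟨fun v => s' v / n, ?_, ?_, ?_⟩
  · intro v
    show 0 ≤ s' v / n
    exact div_nonneg (hs0 v) (le_of_lt hnq)
  · intro u v hE
    show c u v ≤ s' u / n + s' v / n
    have h1 := hsc u v hE
    have h2 : (n : ℚ) * cp u v ≤ s' u + s' v := by rw [← hcN]; exact h1
    have h3 : c u v ≤ cp u v := le_max_left _ _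
    rw [← add_div, le_div_iff₀ hnq]
    nlinarith
  · show 2 * (∑ v, s' v / n) ≤ maxW I.E c
    obtain ⟨Mx, hMx⟩ := exists_maxW I.E cN
    have h1 : ((maxW I.E cN : ℕ) : ℚ) = Wt (fun u v => ((cN u v : ℕ) : ℚ)) Mx := by
      rw [← hMx, Wt_cast]
    have h2 : Wt (fun u v => ((cN u v : ℕ) : ℚ)) Mx = (n : ℚ) * Wt cp Mx := by
      rw [Wt, Wt, Finset.mul_sum]
      apply Finset.sum_congr rfl
      intro v _
      cases hv : Mx.m v with
      | none => simp
      | some u => simpa using hcN v u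
    have h3 : Wt cp Mx ≤ maxW I.E c := Wt_clip_le I c hsym Mx
    have h4 : 2 * (∑ v, s' v / n) = (2 * ∑ v, s' v) / n := by
      rw [← Finset.sum_div]
      ring
    rw [h4, div_le_iff₀ hnq]
    calc 2 * ∑ v, s' v ≤ ((maxW I.E cN : ℕ) : ℚ) := hssum
      _ = (n : ℚ) * Wt cp Mx := by rw [h1, h2]
      _ ≤ maxW I.E c * n := by nlinarith
lemma delta_pointwise (I : PMInstance V) (M M' : Matching V I.E) (v : V) :
    (if prefersVx I M' M v then I.w v else 0) - (if prefersVx I M M' v then I.w v else 0)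
      = (M'.m v).elim 0 (fun u => vote I M v u)
        + (if M'.m v = none then (if M.m v = none then (0:ℚ) else - I.w v) else 0) := by
  cases hM' : M'.m v with
  | none =>
    have hp1 : ¬ prefersVx I M' M v := by
      rintro (⟨h1, h2⟩ | ⟨u, u', h1, h2, h3⟩)
      · exact h2 hM'
      · rw [hM'] at h1; cases h1
    rw [if_neg hp1]
    cases hM : M.m v with
    | none =>
      have hp2 : ¬ prefersVx I M M' v := by
        rintro (⟨h1, h2⟩ | ⟨u, u', h1, h2, h3⟩)
        · exact h2 hM
        · rw [hM] at h1; cases h1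
      rw [if_neg hp2]
      simp
    | some z =>
      have hp2 : prefersVx I M M' v := Or.inl ⟨hM', by rw [hM]; simp⟩
      rw [if_pos hp2]
      simp
  | some u =>
    rw [if_neg (by simp : ¬ (some u = none))]
    cases hM : M.m v with
    | none =>
      have hp1 : prefersVx I M' M v := Or.inl ⟨hM, by rw [hM']; simp⟩
      have hp2 : ¬ prefersVx I M M' v := by
        rintro (⟨h1, h2⟩ | ⟨z, u', h1, h2, h3⟩)
        · rw [hM'] at h1; cases h1
        · rw [hM] at h1; cases h1
      rw [if_pos hp1, if_neg hp2]
      have hv : vote I M v u = I.w v := by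
        rw [vote, if_neg (by rw [hM]; simp), if_pos (Or.inl hM)]
      simp [hv]
    | some z =>
      by_cases hz : u = z
      · rw [← hz] at hM
        have hp1 : ¬ prefersVx I M' M v := by
          rintro (⟨h1, h2⟩ | ⟨u1, u2, h1, h2, h3⟩)
          · rw [hM] at h1; cases h1
          · rw [hM'] at h1; rw [hM] at h2
            rw [← Option.some.inj h1, ← Option.some.inj h2] at h3
            exact I.pref_irrefl v u h3
        have hp2 : ¬ prefersVx I M M' v := by
          rintro (⟨h1, h2⟩ | ⟨u1, u2, h1, h2, h3⟩)
          · rw [hM'] at h1; cases h1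
          · rw [hM] at h1; rw [hM'] at h2
            rw [← Option.some.inj h1, ← Option.some.inj h2] at h3
            exact I.pref_irrefl v u h3
        have hv : vote I M v u = 0 := by rw [vote, if_pos hM]
        rw [if_neg hp1, if_neg hp2]
        simp [hv]
      · have hEvu : I.E v u := M'.valid v u hM'
        have hEvz : I.E v z := M.valid v z hM
        rcases I.pref_total v u z hEvu hEvz hz with hpref | hpref
        · have hp1 : prefersVx I M' M v := Or.inr ⟨u, z, hM', hM, hpref⟩
          have hp2 : ¬ prefersVx I M M' v := by
            rintro (⟨h1, h2⟩ | ⟨u1, u2, h1, h2, h3⟩)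
            · rw [hM'] at h1; cases h1
            · rw [hM] at h1; rw [hM'] at h2
              rw [← Option.some.inj h1, ← Option.some.inj h2] at h3
              exact I.pref_asymm v u z hpref h3
          have hv : vote I M v u = I.w v := by
            rw [vote, if_neg (by rw [hM]; intro h; exact hz (Option.some.inj h).symm),
              if_pos (Or.inr ⟨z, hM, hpref⟩)]
          rw [if_pos hp1, if_neg hp2]
          simp [hv]
        · have hp1 : ¬ prefersVx I M' M v := by
            rintro (⟨h1, h2⟩ | ⟨u1, u2, h1, h2, h3⟩)
            · rw [hM] at h1; cases h1
            · rw [hM'] at h1; rw [hM] at h2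
              rw [← Option.some.inj h1, ← Option.some.inj h2] at h3
              exact I.pref_asymm v z u hpref h3
          have hp2 : prefersVx I M M' v := Or.inr ⟨z, u, hM, hM', hpref⟩
          have hv : vote I M v u = - I.w v := by
            rw [vote, if_neg (by rw [hM]; intro h; exact hz (Option.some.inj h).symm),
              if_neg]
            rintro (h1 | ⟨z', h1, h2⟩)
            · rw [hM] at h1; cases h1
            · rw [hM] at h1
              obtain rfl : z = z' := Option.some.inj h1
              exact I.pref_asymm v z u hpref h2
          rw [if_neg hp1, if_pos hp2]
          simp [hv]

lemma weightPref_sub (I : PMInstance V) (M M' : Matching V I.E) :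
    weightPref I M' M - weightPref I M M'
      = (∑ v, (M'.m v).elim 0 (fun u => vote I M v u))
        + ∑ v, (if M'.m v = none then (if M.m v = none then (0:ℚ) else - I.w v) else 0) := by
  rw [weightPref, weightPref, ← Finset.sum_sub_distrib, ← Finset.sum_add_distrib]
  apply Finset.sum_congr rfl
  intro v _
  exact delta_pointwise I M M' v

lemma witness_popular (I : PMInstance V) (M : Matching V I.E) (y : V → ℚ)
    (hw : IsWitness I M y) : popular I M := by
  obtain ⟨hy0, hy2, hy3, hy4⟩ := hw
  intro M'
  have hsub := weightPref_sub I M M'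
  have hpart2 : (∑ v, (if M'.m v = none then (if M.m v = none then (0:ℚ) else - I.w v) else 0))
      ≤ ∑ v, (if M'.m v = none then y v else 0) := by
    apply Finset.sum_le_sum
    intro v _
    by_cases h : M'.m v = none
    · rw [if_pos h, if_pos h]
      by_cases h2 : M.m v = none
      · rw [if_pos h2]; exact hy3 v h2
      · rw [if_neg h2]; exact hy4 v
    · rw [if_neg h, if_neg h]
  have hpart1 : (∑ v, (M'.m v).elim 0 (fun u => vote I M v u))
      ≤ ∑ v, (M'.m v).elim 0 (fun _ => y v) := by
    have e1 := Wt_split I M' (fun v u => vote I M v u)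
    have e2 := Wt_split I M' (fun v u => y v)
    rw [Wt] at e1 e2
    rw [e1, e2]
    apply Finset.sum_le_sum
    intro v _
    cases hv : M'.m v with
    | none => simp
    | some u =>
      simp only [Option.elim]
      by_cases hA : v ∈ I.A
      · rw [if_pos hA, if_pos hA]
        have hE : I.E v u := M'.valid v u hv
        have := hy2 v u hE
        linarith
      · rw [if_neg hA, if_neg hA]
  have hfinal : (∑ v, (M'.m v).elim 0 (fun _ => y v))
      + (∑ v, if M'.m v = none then y v else 0) = ∑ v, y v := by
    rw [← Finset.sum_add_distrib]
    apply Finset.sum_congr rfl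
    intro v _
    cases hv : M'.m v <;> simp
  linarith

lemma popular_witness (I : PMInstance V) (M : Matching V I.E) (hpop : popular I M) :
    ∃ y : V → ℚ, IsWitness I M y := by
  by_cases hV : Nonempty V
  swap
  · refine ⟨fun _ => 0, by simp, ?_, ?_, ?_⟩
    · intro u v _; exact (hV ⟨u⟩).elim
    · intro v _; exact (hV ⟨v⟩).elim
    · intro v; exact (hV ⟨v⟩).elim
  set l : V → ℚ := fun v => if M.m v = none then 0 else - I.w v with hl
  set B : ℚ := - ∑ v, l v with hB
  set c1 : V → V → ℚ := fun u v => vote I M u v + vote I M v u - l u - l v with hc1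
  have hc1sym : ∀ u v, c1 u v = c1 v u := by
    intro u v
    show vote I M u v + vote I M v u - l u - l v = vote I M v u + vote I M u v - l v - l u
    ring
  have hbound : maxW I.E c1 ≤ 2 * B := by
    apply maxW_le
    intro M'
    have hT := Wt_flip I M' (fun v u => vote I M v u)
    have hL := Wt_flip I M' (fun v u => l v)
    have hW : Wt c1 M' = 2 * ((∑ v, (M'.m v).elim 0 (fun u => vote I M v u))
        - (∑ v, (M'.m v).elim 0 (fun _ => l v))) := by
      rw [Wt]
      have hpt : ∀ v, (M'.m v).elim (0:ℚ) (c1 v)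
          = (M'.m v).elim 0 (fun u => vote I M v u) + (M'.m v).elim 0 (fun u => vote I M u v)
            - (M'.m v).elim 0 (fun _ => l v) - (M'.m v).elim 0 (fun u => l u) := by
        intro v
        cases M'.m v with
        | none => simp
        | some u => rfl
      simp_rw [hpt]
      rw [Finset.sum_sub_distrib, Finset.sum_sub_distrib, Finset.sum_add_distrib]
      rw [← hT, ← hL]
      ring
    have hpop' := hpop M'
    have hsub := weightPref_sub I M M'
    have hlv : ∀ v : V, (if M.m v = none then (0:ℚ) else - I.w v) = l v := by
      intro v
      show _ = if M.m v = none then (0:ℚ) else - I.w v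
      by_cases h : M.m v = none
      · rw [if_pos h]
      · rw [if_neg h]
    simp_rw [hlv] at hsub
    have hid : (∑ v, (if M'.m v = none then l v else 0))
        + (∑ v, (M'.m v).elim 0 (fun _ => l v)) = ∑ v, l v := by
      rw [← Finset.sum_add_distrib]
      apply Finset.sum_congr rfl
      intro v _
      cases hv : M'.m v <;> simp
    rw [hW]
    linarith
  obtain ⟨s, hs0, hsc, hssum⟩ := EGV_rat I c1 hc1sym
  have hsB : ∑ v, s v ≤ B := by linarith
  set δ : ℚ := (B - ∑ v, s v) / (Fintype.card V) with hδ
  have hcard : 0 < ((Fintype.card V : ℕ) : ℚ) := by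
    have : 0 < Fintype.card V := Fintype.card_pos
    exact_mod_cast this
  have hδ0 : 0 ≤ δ := div_nonneg (by linarith) (le_of_lt hcard)
  refine ⟨fun v => l v + s v + δ, ?_, ?_, ?_, ?_⟩
  · show (∑ v, (l v + s v + δ)) = 0
    rw [Finset.sum_add_distrib, Finset.sum_add_distrib, Finset.sum_const, nsmul_eq_mul,
      Finset.card_univ, hδ, hB]
    have hne : ((Fintype.card V : ℕ) : ℚ) ≠ 0 := ne_of_gt hcard
    field_simp
    ring
  · intro u v hE
    have h1 := hsc u v hE
    have hc1e : c1 u v = vote I M u v + vote I M v u - l u - l v := rfl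
    show vote I M u v + vote I M v u ≤ (l u + s u + δ) + (l v + s v + δ)
    linarith
  · intro v hv
    show 0 ≤ l v + s v + δ
    have hlv : l v = 0 := by rw [hl]; simp only; rw [if_pos hv]
    linarith [hs0 v]
  · intro v
    show - I.w v ≤ l v + s v + δ
    have hlv : - I.w v ≤ l v := by
      rw [hl]; simp only
      by_cases h : M.m v = none
      · rw [if_pos h]; linarith [I.w_nonneg v]
      · rw [if_neg h]
    linarith [hs0 v]
end PopAux

/-- A matching is popular iff it admits a witness. -/
theorem popular_iff_exists_witness (I : PMInstance V) (M : Matching V I.E) :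
    popular I M ↔ ∃ y : V → ℚ, IsWitness I M y := by
  constructor
  · exact PopAux.popular_witness I M
  · rintro ⟨y, hy⟩
    exact PopAux.witness_popular I M y hy
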